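/- arXiv:1910.02164 — 2 statements merged into one kernel-verified Lean document; each statement's English description precedes it below -/
import Mathlib

section
/- Invariant of the separating automaton: if ρ is a run of A_sep over a term s to state (R, P, t), then t refines s for P with shift weight(ρ), where weight(ρ) is the sum of the weights of the transitions of ρ. -/
/-- A ranked alphabet: symbols with arities. -/
structure RankedAlphabet where
  symb : Type
  ar : symb → ℕ

/-- Terms (finite ranked trees) over a ranked alphabet. -/
inductive Term (A : RankedAlphabet) : Type where
  | node (a : A.symb) (ts : Fin (A.ar a) → Term A) : Term A

/-- Height of a term: length of the longest branch. -/
def Term.height {A : RankedAlphabet} : Term A → ℕ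
  | .node _ ts => Finset.univ.sup fun i => (ts i).height + 1

/-- Size of a term: number of nodes. -/
def Term.size {A : RankedAlphabet} : Term A → ℕ
  | .node _ ts => 1 + ∑ i, (ts i).size

/-- A nondeterministic tree automaton with real weights on transitions and final states. -/
structure WTA (A : RankedAlphabet) (Q : Type) where
  trans : (a : A.symb) → (Fin (A.ar a) → Q) → Q → Prop
  wt : (a : A.symb) → (Fin (A.ar a) → Q) → Q → ℝ
  final : Q → Prop
  fwt : Q → ℝ

/-- Runs of an automaton over a term, reaching a given state at the root. -/
inductive RunOf {A : RankedAlphabet} {Q : Type} (M : WTA A Q) : Term A → Q → Type where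
  | node (a : A.symb) (ts : Fin (A.ar a) → Term A) (qs : Fin (A.ar a) → Q) (q : Q)
      (hq : M.trans a qs q) (rs : ∀ i, RunOf M (ts i) (qs i)) : RunOf M (.node a ts) q

/-- The weight of a run: sum of the weights of the transitions used. -/
def RunOf.wt {A : RankedAlphabet} {Q : Type} {M : WTA A Q} :
    {t : Term A} → {q : Q} → RunOf M t q → ℝ
  | _, _, .node a _ qs q _ rs => (∑ i, (rs i).wt) + M.wt a qs q

/-- Contexts: terms with exactly one hole. -/
inductive Ctx (A : RankedAlphabet) : Type where
  | hole : Ctx A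
  | node (a : A.symb) (i : Fin (A.ar a)) (c : Ctx A) (ts : Fin (A.ar a) → Term A) : Ctx A

/-- Plugging a term into the hole of a context. -/
def Ctx.plug {A : RankedAlphabet} : Ctx A → Term A → Term A
  | .hole, t => t
  | .node a i c ts, t => .node a (Function.update ts i (c.plug t))

/-- Composition of contexts: plugging the second context into the hole of the first. -/
def Ctx.comp {A : RankedAlphabet} : Ctx A → Ctx A → Ctx A
  | .hole, d => d
  | .node a i c ts, d => .node a i (c.comp d) ts

/-- Iterated composition of a context with itself. -/
def Ctx.pow {A : RankedAlphabet} (m : Ctx A) : ℕ → Ctx A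
  | 0 => .hole
  | n + 1 => m.comp (m.pow n)

/-- Runs over a context, from a state (at the hole) to a state (at the root). -/
inductive CRun {A : RankedAlphabet} {Q : Type} (M : WTA A Q) : Ctx A → Q → Q → Type where
  | hole (p : Q) : CRun M .hole p p
  | node (a : A.symb) (i : Fin (A.ar a)) (c : Ctx A) (ts : Fin (A.ar a) → Term A)
      (qs : Fin (A.ar a) → Q) (p q : Q)
      (hq : M.trans a qs q)
      (hc : CRun M c p (qs i))
      (rs : ∀ j, j ≠ i → RunOf M (ts j) (qs j)) : CRun M (.node a i c ts) p q

/-- The weight of a run over a context. -/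
def CRun.wt {A : RankedAlphabet} {Q : Type} {M : WTA A Q} :
    {c : Ctx A} → {p q : Q} → CRun M c p q → ℝ
  | _, _, _, .hole _ => 0
  | _, _, _, .node a i _ _ qs _ q _ hc rs =>
      (∑ j : {j // j ≠ i}, (rs j.1 j.2).wt) + M.wt a qs q + hc.wt

/-- Gluing a run over a context with a run over a term yields a run over the plugged term. -/
def CRun.glue {A : RankedAlphabet} {Q : Type} {M : WTA A Q} {t : Term A} :
    {c : Ctx A} → {p q : Q} → CRun M c p q → RunOf M t p → RunOf M (c.plug t) q
  | _, _, _, .hole _, r => r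
  | _, _, _, .node a i c ts qs _ q hq hc rs, r =>
      .node a (Function.update ts i (c.plug t)) qs q hq
        (fun j =>
          if h : j = i then
            cast (by subst h; rw [Function.update_self]) (CRun.glue hc r)
          else
            cast (congrArg (fun s => RunOf M s (qs j))
              (Function.update_of_ne h (c.plug t) ts).symm) (rs j h))

/-- Gluing runs over composed contexts. -/
def CRun.cglue {A : RankedAlphabet} {Q : Type} {M : WTA A Q} {d : Ctx A} {p : Q} :
    {c : Ctx A} → {q r : Q} → CRun M c q r → CRun M d p q → CRun M (c.comp d) p r
  | _, _, _, .hole _, rd => rd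
  | _, _, _, .node a i c ts qs _ r hq hc rs, rd =>
      .node a i (c.comp d) ts qs p r hq (hc.cglue rd) rs

/-- The `n`-fold iteration of a loop run over a context. -/
def CRun.pow {A : RankedAlphabet} {Q : Type} {M : WTA A Q} {m : Ctx A} {q : Q}
    (σ : CRun M m q q) : (n : ℕ) → CRun M (m.pow n) q q
  | 0 => .hole q
  | n + 1 => σ.cglue (σ.pow n)

/-- `x` is the weight of some accepting run of `M` over `t`
(weight of the run plus the final-state weight). -/
def AccWeight {A : RankedAlphabet} {Q : Type} (M : WTA A Q) (t : Term A) (x : ℝ) : Prop :=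
  ∃ (q : Q) (r : RunOf M t q), M.final q ∧ r.wt + M.fwt q = x

/-- `M` has some accepting run over `t`. -/
def HasAcc {A : RankedAlphabet} {Q : Type} (M : WTA A Q) (t : Term A) : Prop :=
  ∃ x, AccWeight M t x

/-- `f` is the max-plus semantics of `M`: `f t = ⊥` iff there is no accepting run,
and otherwise `f t` is the maximum weight of an accepting run. -/
def ComputesMax {A : RankedAlphabet} {Q : Type} (M : WTA A Q) (f : Term A → Option ℝ) : Prop :=
  ∀ t, (f t = none ↔ ¬ HasAcc M t) ∧
    ∀ x, f t = some x → AccWeight M t x ∧ ∀ y, AccWeight M t y → y ≤ x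

/-- `f` is the min-plus semantics of `M`. -/
def ComputesMin {A : RankedAlphabet} {Q : Type} (M : WTA A Q) (f : Term A → Option ℝ) : Prop :=
  ∀ t, (f t = none ↔ ¬ HasAcc M t) ∧
    ∀ x, f t = some x → AccWeight M t x ∧ ∀ y, AccWeight M t y → x ≤ y

/-- An automaton is unambiguous if every term has at most one accepting run. -/
def Unambiguous {A : RankedAlphabet} {Q : Type} (M : WTA A Q) : Prop :=
  ∀ (t : Term A) (q q' : Q) (r : RunOf M t q) (r' : RunOf M t q'),
    M.final q → M.final q' → q = q' ∧ HEq r r'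

/-- The order on `ℝ ∪ {⊥}` in which `⊥` is comparable only with itself. -/
def OLe : Option ℝ → Option ℝ → Prop
  | none, none => True
  | some x, some y => x ≤ y
  | _, _ => False

/-- Shifting a value of `ℝ ∪ {⊥}` by a real number. -/
def oshift (u : Option ℝ) (x : ℝ) : Option ℝ := u.map (· + x)

/-- The set of states reachable at the root by some run over `t`. -/
def reachSet {A : RankedAlphabet} {Q : Type} (M : WTA A Q) (t : Term A) : Set Q :=
  {q | Nonempty (RunOf M t q)}

/-- The set of states at the hole from which there is an accepting run over the context `c`. -/
def prodSet {A : RankedAlphabet} {Q : Type} (M : WTA A Q) (c : Ctx A) : Set Q :=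
  {p | ∃ q, M.final q ∧ Nonempty (CRun M c p q)}

section Bi
variable {A : RankedAlphabet} {Q1 Q2 : Type} (M1 : WTA A Q1) (M2 : WTA A Q2)

/-- Reachable states of the disjoint union of the two automata. -/
def biReach (t : Term A) : Set (Q1 ⊕ Q2) :=
  Sum.inl '' reachSet M1 t ∪ Sum.inr '' reachSet M2 t

/-- Productive states of the disjoint union of the two automata. -/
def biProd (c : Ctx A) : Set (Q1 ⊕ Q2) :=
  Sum.inl '' prodSet M1 c ∪ Sum.inr '' prodSet M2 c

/-- Final states of the disjoint union of the two automata. -/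
def biFinal : Set (Q1 ⊕ Q2) :=
  Sum.inl '' {q | M1.final q} ∪ Sum.inr '' {q | M2.final q}

/-- Transition relation of the disjoint union of the two automata. -/
def biTrans (a : A.symb) (qs : Fin (A.ar a) → Q1 ⊕ Q2) (q : Q1 ⊕ Q2) : Prop :=
  (∃ (qs' : Fin (A.ar a) → Q1) (q' : Q1),
      qs = Sum.inl ∘ qs' ∧ q = Sum.inl q' ∧ M1.trans a qs' q') ∨
  (∃ (qs' : Fin (A.ar a) → Q2) (q' : Q2),
      qs = Sum.inr ∘ qs' ∧ q = Sum.inr q' ∧ M2.trans a qs' q')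

/-- The family `Reachable` of sets of states of the form `Reach(t)`. -/
def ReachableSets : Set (Set (Q1 ⊕ Q2)) := {S | ∃ t, biReach M1 M2 t = S}

/-- The family `Productive` of sets of states of the form `Prod(c)`. -/
def ProductiveSets : Set (Set (Q1 ⊕ Q2)) := {S | ∃ c, biProd M1 M2 c = S}

/-- `t` refines `s` for `P` with shift `x`. -/
def Refines (P : Set (Q1 ⊕ Q2)) (t s : Term A) (x : ℝ) : Prop :=
  biReach M1 M2 s = biReach M1 M2 t ∧
  (∀ p : Q1, Sum.inl p ∈ P → ∀ ρ : RunOf M1 s p, ∃ ρ' : RunOf M1 t p, ρ.wt ≤ ρ'.wt + x) ∧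
  (∀ q : Q2, Sum.inr q ∈ P → ∀ τ : RunOf M2 s q, ∃ τ' : RunOf M2 t q, τ'.wt + x ≤ τ.wt)

end Bi

/-- Transitions of the product automaton `A_pro`, relative to a transition relation `Δ`. -/
def ProTrans {A : RankedAlphabet} {Q : Type}
    (Δ : ∀ a : A.symb, (Fin (A.ar a) → Q) → Q → Prop) (a : A.symb)
    (RPs : Fin (A.ar a) → Set Q × Set Q) (RP : Set Q × Set Q) : Prop :=
  RP.1 = {r | ∃ rs, Δ a rs r ∧ ∀ j, rs j ∈ (RPs j).1} ∧
  ∀ i, (RPs i).2 =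
    {ri | ∃ rs p, Δ a rs p ∧ rs i = ri ∧ (∀ j, j ≠ i → rs j ∈ (RPs j).1) ∧ p ∈ RP.2}

section Asep
variable {A : RankedAlphabet} {Q1 Q2 : Type} (M1 : WTA A Q1) (M2 : WTA A Q2)

/-- A state `(R, P, t)` of the separating automaton is well-formed if `R ∈ Reachable`,
`P ∈ Productive`, `Reach(t) = R` and `height(t) ≤ k`. -/
def GoodState (k : ℕ) (S : Set (Q1 ⊕ Q2) × Set (Q1 ⊕ Q2) × Term A) : Prop :=
  S.1 ∈ ReachableSets M1 M2 ∧ S.2.1 ∈ ProductiveSets M1 M2 ∧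
  biReach M1 M2 S.2.2 = S.1 ∧ S.2.2.height ≤ k

/-- The map `sr` is a valid refinement map: for every productive-set `P` and every term
`s`, `sr P s = (t, x)` where `t` has height at most `k` and refines `s` for `P` with
shift `x`. -/
def GoodSr (k : ℕ) (sr : Set (Q1 ⊕ Q2) → Term A → Term A × ℝ) : Prop :=
  ∀ P ∈ ProductiveSets M1 M2, ∀ s : Term A,
    ((sr P s).1).height ≤ k ∧ Refines M1 M2 P (sr P s).1 s (sr P s).2

/-- The separating automaton `A_sep`: states are triples `(R, P, t)`, transitions follow
the product automaton `A_pro` on the first two components and apply the refinement map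
`sr_P` on the third component, with the shift as transition weight; final states are the
`(R, F, t)` with `R ∩ F ≠ ∅`, of final weight `⟦A_max⟧(t)`. -/
noncomputable def Asep (k : ℕ) (sr : Set (Q1 ⊕ Q2) → Term A → Term A × ℝ) :
    WTA A (Set (Q1 ⊕ Q2) × Set (Q1 ⊕ Q2) × Term A) where
  trans a sts out :=
    GoodState M1 M2 k out ∧ (∀ i, GoodState M1 M2 k (sts i)) ∧
    ProTrans (biTrans M1 M2) a (fun i => ((sts i).1, (sts i).2.1)) (out.1, out.2.1) ∧
    out.2.2 = (sr out.2.1 (Term.node a fun i => (sts i).2.2)).1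
  wt a sts out := (sr out.2.1 (Term.node a fun i => (sts i).2.2)).2
  final S := S.2.1 = biFinal M1 M2 ∧ (S.1 ∩ biFinal M1 M2).Nonempty
  fwt S := sSup {x | AccWeight M1 S.2.2 x}

end Asep

section Aux
variable {A : RankedAlphabet} {Q1 Q2 : Type} (M1 : WTA A Q1) (M2 : WTA A Q2)

lemma mem_biReach_inl (s : Term A) (q : Q1) :
    Sum.inl q ∈ biReach M1 M2 s ↔ Nonempty (RunOf M1 s q) := by
  simp [biReach, reachSet]

lemma mem_biReach_inr (s : Term A) (q : Q2) :
    Sum.inr q ∈ biReach M1 M2 s ↔ Nonempty (RunOf M2 s q) := by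
  simp [biReach, reachSet]

lemma refines_trans {P : Set (Q1 ⊕ Q2)} {t u s : Term A} {x y : ℝ}
    (h1 : Refines M1 M2 P t u x) (h2 : Refines M1 M2 P u s y) :
    Refines M1 M2 P t s (x + y) := by
  obtain ⟨hR1, hL1, hU1⟩ := h1
  obtain ⟨hR2, hL2, hU2⟩ := h2
  refine ⟨hR2.trans hR1, ?_, ?_⟩
  · intro p hp ρ
    obtain ⟨ρu, hρu⟩ := hL2 p hp ρ
    obtain ⟨ρ', hρ'⟩ := hL1 p hp ρu
    exact ⟨ρ', by linarith⟩
  · intro q hq τ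
    obtain ⟨τu, hτu⟩ := hU2 q hq τ
    obtain ⟨τ', hτ'⟩ := hU1 q hq τu
    exact ⟨τ', by linarith⟩

lemma refines_cong (a : A.symb) (ss tt : Fin (A.ar a) → Term A)
    (Ps : Fin (A.ar a) → Set (Q1 ⊕ Q2)) (P : Set (Q1 ⊕ Q2))
    (xs : Fin (A.ar a) → ℝ)
    (hrefs : ∀ i, Refines M1 M2 (Ps i) (tt i) (ss i) (xs i))
    (hPs : ∀ i, Ps i = {ri | ∃ rs p, biTrans M1 M2 a rs p ∧ rs i = ri ∧
      (∀ j, j ≠ i → rs j ∈ biReach M1 M2 (tt j)) ∧ p ∈ P}) :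
    Refines M1 M2 P (.node a tt) (.node a ss) (∑ i, xs i) := by
  refine ⟨?_, ?_, ?_⟩
  · ext z
    have key : ∀ (u v : Fin (A.ar a) → Term A),
        (∀ i, biReach M1 M2 (u i) = biReach M1 M2 (v i)) →
        z ∈ biReach M1 M2 (.node a u) → z ∈ biReach M1 M2 (.node a v) := by
      intro u v huv hz
      rcases z with q | q
      · rw [mem_biReach_inl] at hz ⊢
        obtain ⟨ρ⟩ := hz
        cases ρ with
        | node _ _ qs q hq rs =>
          have : ∀ i, Nonempty (RunOf M1 (v i) (qs i)) := fun i => by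
            rw [← mem_biReach_inl M1 M2, ← huv i, mem_biReach_inl]
            exact ⟨rs i⟩
          exact ⟨.node a v qs q hq fun i => (this i).some⟩
      · rw [mem_biReach_inr] at hz ⊢
        obtain ⟨ρ⟩ := hz
        cases ρ with
        | node _ _ qs q hq rs =>
          have : ∀ i, Nonempty (RunOf M2 (v i) (qs i)) := fun i => by
            rw [← mem_biReach_inr M1 M2, ← huv i, mem_biReach_inr]
            exact ⟨rs i⟩
          exact ⟨.node a v qs q hq fun i => (this i).some⟩
    constructor
    · exact key ss tt fun i => (hrefs i).1
    · exact key tt ss fun i => ((hrefs i).1).symm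
  · intro p hp ρ
    cases ρ with
    | node _ _ qs q hq rs =>
      have hmem : ∀ i, Sum.inl (qs i) ∈ Ps i := by
        intro i
        rw [hPs i]
        refine ⟨Sum.inl ∘ qs, Sum.inl p, Or.inl ⟨qs, p, rfl, rfl, hq⟩, rfl, ?_, hp⟩
        intro j _
        show Sum.inl (qs j) ∈ _
        rw [← (hrefs j).1, mem_biReach_inl]
        exact ⟨rs j⟩
      choose rs' hrs' using fun i => (hrefs i).2.1 (qs i) (hmem i) (rs i)
      refine ⟨.node a tt qs p hq rs', ?_⟩
      show (∑ i, (rs i).wt) + M1.wt a qs p ≤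
        ((∑ i, (rs' i).wt) + M1.wt a qs p) + ∑ i, xs i
      have : ∑ i, (rs i).wt ≤ ∑ i, ((rs' i).wt + xs i) :=
        Finset.sum_le_sum fun i _ => hrs' i
      rw [Finset.sum_add_distrib] at this
      linarith
  · intro p hp ρ
    cases ρ with
    | node _ _ qs q hq rs =>
      have hmem : ∀ i, Sum.inr (qs i) ∈ Ps i := by
        intro i
        rw [hPs i]
        refine ⟨Sum.inr ∘ qs, Sum.inr p, Or.inr ⟨qs, p, rfl, rfl, hq⟩, rfl, ?_, hp⟩
        intro j _
        show Sum.inr (qs j) ∈ _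
        rw [← (hrefs j).1, mem_biReach_inr]
        exact ⟨rs j⟩
      choose rs' hrs' using fun i => (hrefs i).2.2 (qs i) (hmem i) (rs i)
      refine ⟨.node a tt qs p hq rs', ?_⟩
      show ((∑ i, (rs' i).wt) + M2.wt a qs p) + ∑ i, xs i ≤
        (∑ i, (rs i).wt) + M2.wt a qs p
      have : ∑ i, ((rs' i).wt + xs i) ≤ ∑ i, (rs i).wt :=
        Finset.sum_le_sum fun i _ => hrs' i
      rw [Finset.sum_add_distrib] at this
      linarith

end Aux

/-- invariant of the separating automaton: if `ρ` is a run of `A_sep`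
over a term `s` to state `(R, P, t)`, then `t` refines `s` for `P` with shift
`weight(ρ)`. -/
theorem asep_invariant {A : RankedAlphabet} {Q1 Q2 : Type}
    [Fintype Q1] [Fintype Q2] (M1 : WTA A Q1) (M2 : WTA A Q2)
    (k : ℕ) (sr : Set (Q1 ⊕ Q2) → Term A → Term A × ℝ)
    (hsr : GoodSr M1 M2 k sr)
    (s : Term A) (S : Set (Q1 ⊕ Q2) × Set (Q1 ⊕ Q2) × Term A)
    (ρ : RunOf (Asep M1 M2 k sr) s S) :
    Refines M1 M2 S.2.1 S.2.2 s ρ.wt := by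
  induction ρ with
  | node a ts qs S hq rs IH =>
    obtain ⟨hgood, hgoods, hpro, ht⟩ := hq
    set u : Term A := Term.node a fun i => (qs i).2.2 with hu
    have hcong : Refines M1 M2 S.2.1 u (.node a ts) (∑ i, (rs i).wt) := by
      refine refines_cong M1 M2 a ts (fun i => (qs i).2.2) (fun i => (qs i).2.1)
        S.2.1 (fun i => (rs i).wt) IH ?_
      intro i
      have := hpro.2 i
      simp only at this
      show (qs i).2.1 = _
      rw [this]
      ext ri
      refine exists_congr fun rss => exists_congr fun p => and_congr_right fun _ =>
        and_congr_right fun _ => and_congr_left fun _ => forall_congr' fun j =>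
        imp_congr_right fun _ => ?_
      rw [(hgoods j).2.2.1]
    have hsr' := hsr S.2.1 hgood.2.1 u
    have hrefsr : Refines M1 M2 S.2.1 S.2.2 u ((Asep M1 M2 k sr).wt a qs S) := by
      rw [ht]
      exact hsr'.2
    have := refines_trans M1 M2 hrefsr hcong
    have hwt : RunOf.wt (M := Asep M1 M2 k sr)
        (.node a ts qs S ⟨hgood, hgoods, hpro, ht⟩ rs)
        = (Asep M1 M2 k sr).wt a qs S + ∑ i, (rs i).wt := by
      show (∑ i, (rs i).wt) + _ = _
      ring
    rw [hwt]
    exact this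
end

section
/- Pumped run weights are affine in the number of iterations: let c be a context, m a context with a run σ from q to q of weight w, t a term with a run σ'' to q of weight w'', and let σ' be an accepting run over c from q of accepting weight w'. Then for every n ≥ 0 the glued run over u_n = c ∘ m^n ∘ t is an accepting run of accepting weight w' + n·w + w''. -/
lemma RunOf.wt_cast {A : RankedAlphabet} {Q : Type} {M : WTA A Q} {t t' : Term A} {q : Q}
    (h : t = t') (e : RunOf M t q = RunOf M t' q) (r : RunOf M t q) :
    (cast e r).wt = r.wt := by subst h; rfl

lemma CRun.glue_wt {A : RankedAlphabet} {Q : Type} {M : WTA A Q} {t : Term A} :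
    ∀ {c : Ctx A} {p q : Q} (σ : CRun M c p q) (r : RunOf M t p),
      (σ.glue r).wt = σ.wt + r.wt := by
  intro c p q σ r
  induction σ with
  | hole p => simp [CRun.glue, CRun.wt]; rfl
  | node a i c ts qs p q hq hc rs ih =>
    simp only [CRun.glue, RunOf.wt, CRun.wt]
    rw [Fintype.sum_eq_add_sum_compl i, dif_pos rfl,
      RunOf.wt_cast (Function.update_self i (c.plug t) ts).symm, ih]
    have h2 : ∀ j ∈ ({i}ᶜ : Finset (Fin (A.ar a))),
        (if h : j = i then
          cast (by subst h; rw [Function.update_self]) (CRun.glue hc r)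
        else
          cast (congrArg (fun s => RunOf M s (qs j))
            (Function.update_of_ne h (c.plug t) ts).symm) (rs j h)).wt
        = (if h : j = i then 0 else (rs j h).wt) := by
      intro j hj
      have hji : j ≠ i := by simpa using hj
      rw [dif_neg hji, dif_neg hji,
        RunOf.wt_cast (Function.update_of_ne hji (c.plug t) ts).symm]
    rw [Finset.sum_congr rfl h2]
    have h3 : (∑ j ∈ ({i}ᶜ : Finset (Fin (A.ar a))),
        if h : j = i then 0 else (rs j h).wt)
        = ∑ j : {j // j ≠ i}, (rs j.1 j.2).wt := by
      rw [Finset.sum_subtype (p := fun j => j ≠ i) ({i}ᶜ : Finset (Fin (A.ar a)))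
        (fun x => by simp) (fun j => if h : j = i then (0:ℝ) else (rs j h).wt)]
      exact Finset.sum_congr rfl fun j _ => dif_neg j.2
    rw [h3]; ring

lemma CRun.cglue_wt {A : RankedAlphabet} {Q : Type} {M : WTA A Q} {d : Ctx A} {p : Q} :
    ∀ {c : Ctx A} {q r : Q} (σ : CRun M c q r) (ρ : CRun M d p q),
      (σ.cglue ρ).wt = σ.wt + ρ.wt := by
  intro c q r σ ρ
  induction σ with
  | hole p => simp [CRun.cglue, CRun.wt]; rfl
  | node a i c ts qs p' q' hq hc rs ih =>
    simp only [CRun.cglue, CRun.wt, ih]; ring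

lemma CRun.pow_wt {A : RankedAlphabet} {Q : Type} {M : WTA A Q} {m : Ctx A} {q : Q}
    (σ : CRun M m q q) : ∀ n : ℕ, (σ.pow n).wt = n * σ.wt := by
  intro n
  induction n with
  | zero => simp [CRun.pow, CRun.wt]
  | succ n ih =>
    have h := CRun.cglue_wt σ (σ.pow n)
    rw [ih] at h
    exact h.trans (by push_cast; ring)

/-- pumped run weights are affine in the number of iterations: given an
accepting run `σ'` over `c` from `q` (with final root state `qf`), a loop run `σ` over `m`
from `q` to `q`, and a run `σ''` over `t` to `q`, for every `n` the glued run over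
`u_n = c ∘ mⁿ ∘ t` is accepting, of accepting weight `w' + n·w + w''`. -/
theorem pumped_weight_affine {A : RankedAlphabet} {Q : Type} (M : WTA A Q)
    (c m : Ctx A) (t : Term A) (q qf : Q) (hqf : M.final qf)
    (σ' : CRun M c q qf) (σ : CRun M m q q) (σ'' : RunOf M t q) :
    ∀ n : ℕ,
      ((σ'.cglue (σ.pow n)).glue σ'').wt + M.fwt qf
        = (σ'.wt + M.fwt qf) + n * σ.wt + σ''.wt := by
  intro n
  rw [CRun.glue_wt, CRun.cglue_wt, CRun.pow_wt]
  ring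
end
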